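/- arXiv:2409.14189 — 3 statements merged into one kernel-verified Lean document; each statement's English description precedes it below -/
import Mathlib

section
/- Let σ be a nondecreasing sigmoidal function satisfying (Σ1)–(Σ5) with parameters m ≥ 2 and β > m + 1. Then for every s ∈ {1, …, m} and every j ∈ {0, …, s−1}, the algebraic moment 𝒜_j(φ_σ^{(s)}, x) := ∑_{k∈ℤ} φ_σ^{(s)}(x−k)(k−x)^j equals 0 for every x ∈ ℝ. -/
open Filter Topology MeasureTheory

/-- The density (kernel) function generated by a sigmoidal function. -/
noncomputable def phiFn (σ : ℝ → ℝ) (x : ℝ) : ℝ := (σ (x + 1) - σ (x - 1)) / 2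

/-- σ is a (measurable) sigmoidal function. -/
def Sigmoidal (σ : ℝ → ℝ) : Prop :=
  Measurable σ ∧ Tendsto σ atBot (𝓝 0) ∧ Tendsto σ atTop (𝓝 1)

/-- (Σ1): σ(x) - 1/2 is an odd function. -/
def Sigma1 (σ : ℝ → ℝ) : Prop := ∀ x : ℝ, σ (-x) - 1/2 = -(σ x - 1/2)

/-- (Σ2): σ ∈ C²(ℝ) and σ is concave on [0, +∞). -/
def Sigma2 (σ : ℝ → ℝ) : Prop := ContDiff ℝ 2 σ ∧ ConcaveOn ℝ (Set.Ici 0) σ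

/-- (Σ3): σ(x) = O(|x|^{-α-1}) as x → -∞, with α > 0. -/
def Sigma3 (σ : ℝ → ℝ) (α : ℝ) : Prop :=
  0 < α ∧ σ =O[atBot] fun x : ℝ => |x| ^ (-α - 1)

/-- (Σ4): σ ∈ C^m(ℝ), m ≥ 2, and for each s = 1,…,m there are constants
`K s, C s > 0` with |σ^{(s)}(x)| ≤ C s * |x|^{-β-1} for |x| ≥ K s, where β > m + 1. -/
def Sigma4 (σ : ℝ → ℝ) (m : ℕ) (β : ℝ) (K C : ℕ → ℝ) : Prop :=
  2 ≤ m ∧ (m : ℝ) + 1 < β ∧ ContDiff ℝ m σ ∧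
    ∀ s : ℕ, 1 ≤ s → s ≤ m → 0 < K s ∧ 0 < C s ∧
      ∀ x : ℝ, K s ≤ |x| → |iteratedDeriv s σ x| ≤ C s * |x| ^ (-β - 1)

/-- Algebraic moment of order ν of Φ. -/
noncomputable def algMoment (Φ : ℝ → ℝ) (ν : ℕ) (x : ℝ) : ℝ :=
  ∑' k : ℤ, Φ (x - (k : ℝ)) * ((k : ℝ) - x) ^ ν

/-- (Σ5): the algebraic moments of order j = 1,…,m of φ_σ are constants A j. -/
def Sigma5 (σ : ℝ → ℝ) (m : ℕ) (A : ℕ → ℝ) : Prop :=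
  ∀ j : ℕ, 1 ≤ j → j ≤ m → ∀ x : ℝ, algMoment (phiFn σ) j x = A j

/-- Truncated algebraic moment of order ν of Φ (associated with integers a < b). -/
noncomputable def truncMoment (Φ : ℝ → ℝ) (ν : ℕ) (a b : ℤ) (n : ℕ) (u : ℝ) : ℝ :=
  ∑ k ∈ Finset.Icc ((n : ℤ) * a) ((n : ℤ) * b), Φ (u - (k : ℝ)) * ((k : ℝ) - u) ^ ν

/-- The ν-th discrete absolute moment function of Φ (before taking sup over u). -/
noncomputable def discMoment (Φ : ℝ → ℝ) (ν : ℝ) (u : ℝ) : ℝ :=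
  ∑' k : ℤ, |Φ (u - (k : ℝ))| * |u - (k : ℝ)| ^ ν

/-- The Riemann zeta function (as a real series), ζ(p) = ∑_{i≥1} i^{-p}. -/
noncomputable def zetaR (p : ℝ) : ℝ := ∑' i : ℕ, ((i : ℝ) + 1) ^ (-p)

/-- The NN operator F_n activated by σ. -/
noncomputable def Fop (σ : ℝ → ℝ) (f : ℝ → ℝ) (a b : ℝ) (n : ℕ) (x : ℝ) : ℝ :=
  (∑ k ∈ Finset.Icc ⌈(n : ℝ) * a⌉ ⌊(n : ℝ) * b⌋, f ((k : ℝ) / n) * phiFn σ ((n : ℝ) * x - k)) /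
    (∑ k ∈ Finset.Icc ⌈(n : ℝ) * a⌉ ⌊(n : ℝ) * b⌋, phiFn σ ((n : ℝ) * x - k))

/-- The modified NN operator F̃_n (integer endpoints a < b). -/
noncomputable def Ftil (σ : ℝ → ℝ) (f : ℝ → ℝ) (a b : ℤ) (n : ℕ) (x : ℝ) : ℝ :=
  ∑ k ∈ Finset.Icc ((n : ℤ) * a) ((n : ℤ) * b), f ((k : ℝ) / n) * phiFn σ ((n : ℝ) * x - (k : ℝ))

/-- Sup-norm of g on [a,b]. -/
noncomputable def supNormOn (g : ℝ → ℝ) (a b : ℝ) : ℝ := ⨆ x : Set.Icc a b, |g x|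

/-- Modulus of continuity of g on [a,b]. -/
noncomputable def modulus (g : ℝ → ℝ) (a b h : ℝ) : ℝ :=
  sSup {y : ℝ | ∃ u ∈ Set.Icc a b, ∃ v ∈ Set.Icc a b, |u - v| ≤ h ∧ y = |g u - g v|}

/-- Discrete absolute moment (natural order ν) of Φ: sup over u of the moment series. -/
noncomputable def dmomentN (Φ : ℝ → ℝ) (ν : ℕ) : ℝ :=
  ⨆ u : ℝ, ∑' k : ℤ, |Φ (u - (k : ℝ))| * |u - (k : ℝ)| ^ ν




section AuxAlgMoment

lemma phi_contDiff {σ : ℝ → ℝ} {n : ℕ} (h : ContDiff ℝ n σ) : ContDiff ℝ n (phiFn σ) := by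
  have h1 : ContDiff ℝ n fun x : ℝ => σ (x + 1) := h.comp (contDiff_id.add contDiff_const)
  have h2 : ContDiff ℝ n fun x : ℝ => σ (x - 1) := h.comp (contDiff_id.sub contDiff_const)
  exact (h1.sub h2).div_const 2

lemma phi_iter {σ : ℝ → ℝ} {m t : ℕ} (h : ContDiff ℝ m σ) (ht : t ≤ m) :
    iteratedDeriv t (phiFn σ) =
      fun u => (iteratedDeriv t σ (u + 1) - iteratedDeriv t σ (u - 1)) / 2 := by
  induction t with
  | zero => simp only [iteratedDeriv_zero]; rfl
  | succ t ih =>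
    have htm : t < m := Nat.lt_of_succ_le ht
    have hd : Differentiable ℝ (iteratedDeriv t σ) :=
      h.differentiable_iteratedDeriv t (by exact_mod_cast htm)
    rw [iteratedDeriv_succ, ih htm.le]
    funext u
    have d1 : DifferentiableAt ℝ (fun u : ℝ => iteratedDeriv t σ (u + 1)) u := by
      simpa [Function.comp_def] using (hd (u + 1)).comp u (differentiableAt_id.add_const 1)
    have d2 : DifferentiableAt ℝ (fun u : ℝ => iteratedDeriv t σ (u - 1)) u := by
      simpa [Function.comp_def] using (hd (u - 1)).comp u (differentiableAt_id.sub_const 1)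
    rw [deriv_div_const, deriv_fun_sub d1 d2, deriv_comp_add_const, deriv_comp_sub_const,
      iteratedDeriv_succ]

lemma iter_hasDerivAt {f : ℝ → ℝ} {m t : ℕ} (h : ContDiff ℝ m f) (ht : t < m) (u : ℝ) :
    HasDerivAt (iteratedDeriv t f) (iteratedDeriv (t + 1) f u) u := by
  have hd : Differentiable ℝ (iteratedDeriv t f) :=
    h.differentiable_iteratedDeriv t (by exact_mod_cast ht)
  rw [iteratedDeriv_succ]
  exact (hd u).hasDerivAt

lemma summable_inv_one_add_sq (x : ℝ) :
    Summable fun k : ℤ => ((1 + |x - (k : ℝ)|) ^ 2)⁻¹ := by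
  have hsum : Summable fun k : ℤ => 1 / (k : ℝ) ^ 2 :=
    Real.summable_one_div_int_pow.mpr one_lt_two
  apply summable_of_isBigO hsum
  rw [Asymptotics.isBigO_iff]
  refine ⟨4, ?_⟩
  have hfin : {k : ℤ | ¬ 2 * (|x| + 1) ≤ |(k : ℝ)|}.Finite := by
    apply Set.Finite.subset (Set.finite_Icc (-⌈2 * (|x| + 1)⌉) ⌈2 * (|x| + 1)⌉)
    intro k hk
    simp only [Set.mem_setOf_eq, not_le] at hk
    have h1 : |(k : ℝ)| ≤ ((⌈2 * (|x| + 1)⌉ : ℤ) : ℝ) := hk.le.trans (Int.le_ceil _)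
    rw [← Int.cast_abs] at h1
    have h2 : |k| ≤ ⌈2 * (|x| + 1)⌉ := by exact_mod_cast h1
    simpa [Set.mem_Icc] using abs_le.mp h2
  filter_upwards [Filter.eventually_cofinite.mpr hfin] with k hk
  have hx0 : (0:ℝ) ≤ |x| := abs_nonneg x
  have hk2 : (2:ℝ) ≤ |(k:ℝ)| := by linarith
  have hsub : |(k:ℝ)| - |x| ≤ |x - (k:ℝ)| := by
    have := abs_sub_abs_le_abs_sub (k:ℝ) x
    rw [abs_sub_comm] at this; linarith
  have h2 : |(k:ℝ)| / 2 ≤ 1 + |x - (k:ℝ)| := by linarith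
  have e2 : (|(k:ℝ)| / 2) ^ 2 ≤ (1 + |x - (k:ℝ)|) ^ 2 :=
    pow_le_pow_left₀ (by positivity) h2 2
  have e3 : ((1 + |x - (k:ℝ)|) ^ 2)⁻¹ ≤ ((|(k:ℝ)| / 2) ^ 2)⁻¹ := by
    apply inv_anti₀ (by positivity) e2
  have hknz : (k:ℝ) ≠ 0 := by intro h; rw [h] at hk2; simp at hk2; linarith
  calc ‖((1 + |x - (k:ℝ)|) ^ 2)⁻¹‖ = ((1 + |x - (k:ℝ)|) ^ 2)⁻¹ := by
        rw [Real.norm_eq_abs, abs_of_nonneg (by positivity)]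
    _ ≤ ((|(k:ℝ)| / 2) ^ 2)⁻¹ := e3
    _ = 4 * ‖1 / (k:ℝ) ^ 2‖ := by
        rw [Real.norm_eq_abs, abs_of_nonneg (a := 1/(k:ℝ)^2) (one_div_nonneg.mpr (sq_nonneg _)), div_pow, sq_abs]
        field_simp
        ring

lemma beta_pos {σ : ℝ → ℝ} {m : ℕ} {β : ℝ} {K C : ℕ → ℝ} (h4 : Sigma4 σ m β K C) :
    (3:ℝ) ≤ β := by
  obtain ⟨hm2, hβ, -, -⟩ := h4
  have : (2:ℝ) ≤ (m:ℝ) := by exact_mod_cast hm2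
  linarith

lemma phi_tail {σ : ℝ → ℝ} {β : ℝ} {m : ℕ} {K C : ℕ → ℝ} (h4 : Sigma4 σ m β K C)
    {t : ℕ} (ht : t ≤ m) :
    ∃ K₀ C₀ : ℝ, 2 ≤ K₀ ∧ 0 ≤ C₀ ∧ ∀ u : ℝ, K₀ ≤ |u| →
      |iteratedDeriv t (phiFn σ) u| ≤ C₀ * (|u| - 1) ^ (-β - 1) := by
  have hβ3 := beta_pos h4
  obtain ⟨hm2, hβ, hσm, hb⟩ := h4
  have habs : ∀ u ξ : ℝ, ξ ∈ Set.Icc (u - 1) (u + 1) → |u| - 1 ≤ |ξ| := by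
    intro u ξ hξ
    obtain ⟨hl, hr⟩ := hξ
    have h1 : |u - ξ| ≤ 1 := abs_le.mpr ⟨by linarith, by linarith⟩
    have h2 := abs_sub_abs_le_abs_sub u ξ
    linarith
  rcases Nat.eq_zero_or_pos t with rfl | ht1
  · obtain ⟨hK, hC, hb1⟩ := hb 1 le_rfl (le_trans one_le_two hm2)
    refine ⟨K 1 + 2, C 1, by linarith, hC.le, fun u hu => ?_⟩
    rw [iteratedDeriv_zero]
    have hdiff : Differentiable ℝ σ := hσm.differentiable (by exact_mod_cast (by omega : m ≠ 0))
    have hbound : ∀ ξ ∈ Set.Icc (u - 1) (u + 1), ‖deriv σ ξ‖ ≤ C 1 * (|u| - 1) ^ (-β - 1) := by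
      intro ξ hξ
      have hξabs : |u| - 1 ≤ |ξ| := habs u ξ hξ
      have h1 : K 1 ≤ |ξ| := by linarith
      have h2 := hb1 ξ h1
      rw [iteratedDeriv_one] at h2
      rw [Real.norm_eq_abs]
      refine h2.trans ?_
      have h3 : |ξ| ^ (-β - 1) ≤ (|u| - 1) ^ (-β - 1) :=
        Real.rpow_le_rpow_of_nonpos (by linarith) hξabs (by linarith)
      exact mul_le_mul_of_nonneg_left h3 hC.le
    have hmvt := Convex.norm_image_sub_le_of_norm_deriv_le
      (fun ξ _ => hdiff ξ) hbound (convex_Icc _ _)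
      (show u - 1 ∈ Set.Icc (u - 1) (u + 1) from Set.mem_Icc.mpr ⟨le_rfl, by linarith⟩)
      (show u + 1 ∈ Set.Icc (u - 1) (u + 1) from Set.mem_Icc.mpr ⟨by linarith, le_rfl⟩)
    rw [Real.norm_eq_abs, Real.norm_eq_abs] at hmvt
    have h4 : |u + 1 - (u - 1)| = 2 := by rw [show u + 1 - (u-1) = (2:ℝ) by ring]; norm_num
    rw [h4] at hmvt
    show |(σ (u + 1) - σ (u - 1)) / 2| ≤ _
    rw [abs_div, abs_of_pos (show (0:ℝ) < 2 by norm_num)]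
    linarith
  · obtain ⟨hK, hC, hbt⟩ := hb t ht1 ht
    refine ⟨K t + 2, C t, by linarith, hC.le, fun u hu => ?_⟩
    rw [phi_iter hσm ht]
    have key : ∀ v : ℝ, |u| - 1 ≤ |v| →
        |iteratedDeriv t σ v| ≤ C t * (|u| - 1) ^ (-β - 1) := by
      intro v hv
      have h1 : K t ≤ |v| := by linarith
      refine (hbt v h1).trans ?_
      have h3 : |v| ^ (-β - 1) ≤ (|u| - 1) ^ (-β - 1) :=
        Real.rpow_le_rpow_of_nonpos (by linarith) hv (by linarith)
      exact mul_le_mul_of_nonneg_left h3 hC.le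
    have b1 := key (u + 1) (habs u (u+1) (Set.mem_Icc.mpr ⟨by linarith, by linarith⟩))
    have b2 := key (u - 1) (habs u (u-1) (Set.mem_Icc.mpr ⟨by linarith, by linarith⟩))
    have := abs_sub (iteratedDeriv t σ (u + 1)) (iteratedDeriv t σ (u - 1))
    show |(iteratedDeriv t σ (u + 1) - iteratedDeriv t σ (u - 1)) / 2| ≤ _
    rw [abs_div, abs_of_pos (show (0:ℝ) < 2 by norm_num)]
    linarith

lemma phi_decay {σ : ℝ → ℝ} {β : ℝ} {m : ℕ} {K C : ℕ → ℝ} (h4 : Sigma4 σ m β K C)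
    {t j : ℕ} (ht : t ≤ m) (hj : j ≤ m) :
    ∃ D : ℝ, 0 ≤ D ∧ ∀ u : ℝ,
      |iteratedDeriv t (phiFn σ) u| * |u| ^ j ≤ D * ((1 + |u|) ^ 2)⁻¹ := by
  obtain ⟨K₀, C₀, hK₀, hC₀, htail⟩ := phi_tail h4 ht
  have hβ3 := beta_pos h4
  obtain ⟨hm2, hβ, hσm, -⟩ := h4
  have hcont : Continuous fun u : ℝ =>
      |iteratedDeriv t (phiFn σ) u| * |u| ^ j * (1 + |u|) ^ 2 := by
    have h1 : Continuous (iteratedDeriv t (phiFn σ)) :=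
      (phi_contDiff hσm).continuous_iteratedDeriv t (by exact_mod_cast ht)
    exact (h1.abs.mul (continuous_abs.pow j)).mul
      ((continuous_const.add continuous_abs).pow 2)
  obtain ⟨D₁, hD₁⟩ := (isCompact_Icc (a := -K₀) (b := K₀)).exists_bound_of_continuousOn
    hcont.continuousOn
  have hD₁0 : 0 ≤ D₁ :=
    le_trans (norm_nonneg _) (hD₁ 0 (Set.mem_Icc.mpr ⟨by linarith, by linarith⟩))
  refine ⟨max D₁ (C₀ * 3 ^ (j + 2)), le_max_of_le_left hD₁0, fun u => ?_⟩
  have hpos : (0:ℝ) < (1 + |u|) ^ 2 := by positivity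
  rw [show (max D₁ (C₀ * 3 ^ (j + 2))) * ((1 + |u|) ^ 2)⁻¹
      = (max D₁ (C₀ * 3 ^ (j + 2))) / (1 + |u|) ^ 2 from (div_eq_mul_inv _ _).symm,
    le_div_iff₀ hpos]
  rcases le_or_gt (|u|) K₀ with hcase | hcase
  · have hmem : u ∈ Set.Icc (-K₀) K₀ := by
      rw [Set.mem_Icc]; constructor <;> [linarith [neg_abs_le u]; linarith [le_abs_self u]]
    refine le_trans ?_ (le_trans (le_trans (le_abs_self _) (hD₁ u hmem)) (le_max_left _ _))
    exact le_of_eq rfl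
  · have h2u : (2:ℝ) ≤ |u| := le_trans hK₀ hcase.le
    have hb1 : (1:ℝ) ≤ |u| - 1 := by linarith
    have htl := htail u hcase.le
    have hjm : (j:ℝ) ≤ (m:ℝ) := by exact_mod_cast hj
    have hmβ : (m:ℝ) + 1 < β := hβ
    have e1 : (|u| - 1) ^ (-β - 1) ≤ (|u| - 1) ^ (-((j:ℝ) + 2)) :=
      Real.rpow_le_rpow_of_exponent_le hb1 (by linarith)
    have e2 : (|u| - 1) ^ (-((j:ℝ) + 2)) = ((|u| - 1) ^ (j + 2 : ℕ))⁻¹ := by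
      rw [Real.rpow_neg (by linarith), ← Real.rpow_natCast (|u| - 1) (j + 2)]
      push_cast
      ring_nf
    have e3 : |u| ^ j * (1 + |u|) ^ 2 ≤ (1 + |u|) ^ (j + 2) := by
      rw [pow_add]
      exact mul_le_mul_of_nonneg_right
        (pow_le_pow_left₀ (abs_nonneg u) (by linarith) j) (by positivity)
    have e4 : (1 + |u|) ^ (j + 2) ≤ 3 ^ (j + 2) * (|u| - 1) ^ (j + 2) := by
      rw [← mul_pow]
      exact pow_le_pow_left₀ (by positivity) (by linarith) (j + 2)
    have hPpos : (0:ℝ) < (|u| - 1) ^ (j + 2) := by positivity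
    calc |iteratedDeriv t (phiFn σ) u| * |u| ^ j * (1 + |u|) ^ 2
        ≤ (C₀ * (|u| - 1) ^ (-β - 1)) * (|u| ^ j * (1 + |u|) ^ 2) := by
          rw [mul_assoc]
          exact mul_le_mul_of_nonneg_right htl (by positivity)
      _ ≤ (C₀ * ((|u| - 1) ^ (j + 2 : ℕ))⁻¹) * (3 ^ (j + 2) * (|u| - 1) ^ (j + 2)) := by
          apply mul_le_mul
          · rw [← e2]; exact mul_le_mul_of_nonneg_left e1 hC₀
          · exact e3.trans e4
          · positivity
          · positivity
      _ = C₀ * 3 ^ (j + 2) * (((|u| - 1) ^ (j + 2))⁻¹ * (|u| - 1) ^ (j + 2)) := by ring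
      _ = C₀ * 3 ^ (j + 2) := by rw [inv_mul_cancel₀ (ne_of_gt hPpos), mul_one]
      _ ≤ max D₁ (C₀ * 3 ^ (j + 2)) := le_max_right _ _

lemma sigma_decay {σ : ℝ → ℝ} {β : ℝ} {m : ℕ} {K C : ℕ → ℝ} (h4 : Sigma4 σ m β K C)
    {t : ℕ} (ht1 : 1 ≤ t) (ht : t ≤ m) :
    ∃ D : ℝ, 0 ≤ D ∧ ∀ u : ℝ, |iteratedDeriv t σ u| ≤ D * ((1 + |u|) ^ 2)⁻¹ := by
  have hβ3 := beta_pos h4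
  obtain ⟨hm2, hβ, hσm, hb⟩ := h4
  obtain ⟨hK, hC, hbt⟩ := hb t ht1 ht
  have hcont : Continuous fun u : ℝ => |iteratedDeriv t σ u| * (1 + |u|) ^ 2 := by
    have h1 : Continuous (iteratedDeriv t σ) :=
      hσm.continuous_iteratedDeriv t (by exact_mod_cast ht)
    exact h1.abs.mul ((continuous_const.add continuous_abs).pow 2)
  obtain ⟨D₁, hD₁⟩ := (isCompact_Icc (a := -(K t + 1)) (b := K t + 1)).exists_bound_of_continuousOn
    hcont.continuousOn
  have hD₁0 : 0 ≤ D₁ :=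
    le_trans (norm_nonneg _) (hD₁ 0 (Set.mem_Icc.mpr ⟨by linarith, by linarith⟩))
  refine ⟨max D₁ (4 * C t), le_max_of_le_left hD₁0, fun u => ?_⟩
  have hpos : (0:ℝ) < (1 + |u|) ^ 2 := by positivity
  rw [show (max D₁ (4 * C t)) * ((1 + |u|) ^ 2)⁻¹
      = (max D₁ (4 * C t)) / (1 + |u|) ^ 2 from (div_eq_mul_inv _ _).symm,
    le_div_iff₀ hpos]
  rcases le_or_gt (|u|) (K t + 1) with hcase | hcase
  · have hmem : u ∈ Set.Icc (-(K t + 1)) (K t + 1) := by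
      rw [Set.mem_Icc]; constructor <;> [linarith [neg_abs_le u]; linarith [le_abs_self u]]
    exact le_trans (le_trans (le_abs_self _) (hD₁ u hmem)) (le_max_left _ _)
  · have h1u : (1:ℝ) ≤ |u| := by linarith
    have htl := hbt u (by linarith)
    have e1 : |u| ^ (-β - 1) ≤ |u| ^ (-(2:ℝ)) :=
      Real.rpow_le_rpow_of_exponent_le h1u (by linarith)
    have e2 : |u| ^ (-(2:ℝ)) = (|u| ^ (2:ℕ))⁻¹ := by
      rw [Real.rpow_neg (abs_nonneg u), ← Real.rpow_natCast (|u|) 2]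
      norm_num
    have e4 : (1 + |u|) ^ 2 ≤ 4 * |u| ^ 2 := by nlinarith [abs_nonneg u]
    have hPpos : (0:ℝ) < |u| ^ 2 := by positivity
    calc |iteratedDeriv t σ u| * (1 + |u|) ^ 2
        ≤ (C t * (|u| ^ (2:ℕ))⁻¹) * (4 * |u| ^ 2) := by
          apply mul_le_mul
          · refine htl.trans ?_
            rw [← e2]; exact mul_le_mul_of_nonneg_left e1 hC.le
          · exact e4
          · positivity
          · positivity
      _ = 4 * C t * ((|u| ^ 2)⁻¹ * |u| ^ 2) := by ring
      _ = 4 * C t := by rw [inv_mul_cancel₀ (ne_of_gt hPpos), mul_one]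
      _ ≤ max D₁ (4 * C t) := le_max_right _ _

lemma moment_summable {Φ : ℝ → ℝ} {D : ℝ} {j : ℕ}
    (hbd : ∀ u, |Φ u| * |u| ^ j ≤ D * ((1 + |u|) ^ 2)⁻¹) (x : ℝ) :
    Summable fun k : ℤ => Φ (x - (k : ℝ)) * ((k : ℝ) - x) ^ j := by
  apply Summable.of_norm_bounded ((summable_inv_one_add_sq x).mul_left D)
  intro k
  rw [Real.norm_eq_abs, abs_mul, abs_pow, abs_sub_comm ((k:ℝ)) x]
  exact hbd _

lemma moment_zero_vanish {σ : ℝ → ℝ} {β : ℝ} {m : ℕ} {K C : ℕ → ℝ}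
    (h4 : Sigma4 σ m β K C) {t : ℕ} (ht1 : 1 ≤ t) (ht : t ≤ m) (x : ℝ) :
    algMoment (iteratedDeriv t (phiFn σ)) 0 x = 0 := by
  obtain ⟨D, hD0, hD⟩ := sigma_decay h4 ht1 ht
  have hσm := h4.2.2.1
  have hsum : ∀ c : ℝ, Summable fun k : ℤ => iteratedDeriv t σ (c - (k:ℝ)) := by
    intro c
    apply Summable.of_norm_bounded ((summable_inv_one_add_sq c).mul_left D)
    intro k; rw [Real.norm_eq_abs]; exact hD _
  have h1 : ∀ k : ℤ, iteratedDeriv t (phiFn σ) (x - (k:ℝ)) * ((k:ℝ) - x) ^ (0:ℕ)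
      = (iteratedDeriv t σ ((x + 1) - (k:ℝ)) - iteratedDeriv t σ ((x - 1) - (k:ℝ))) / 2 := by
    intro k
    rw [pow_zero, mul_one, phi_iter hσm ht]
    have e1 : x - (k:ℝ) + 1 = (x + 1) - (k:ℝ) := by ring
    have e2 : x - (k:ℝ) - 1 = (x - 1) - (k:ℝ) := by ring
    simp only [e1, e2]
  unfold algMoment
  rw [tsum_congr h1]
  have reix : ∑' k : ℤ, iteratedDeriv t σ ((x - 1) - (k:ℝ))
      = ∑' k : ℤ, iteratedDeriv t σ ((x + 1) - (k:ℝ)) := by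
    calc ∑' k : ℤ, iteratedDeriv t σ ((x - 1) - (k:ℝ))
        = ∑' k : ℤ, (fun k : ℤ => iteratedDeriv t σ ((x + 1) - (k:ℝ)))
            ((Equiv.addRight (2:ℤ)) k) := by
          apply tsum_congr; intro k
          simp only [Equiv.coe_addRight]
          congr 1
          push_cast
          ring
      _ = ∑' k : ℤ, iteratedDeriv t σ ((x + 1) - (k:ℝ)) :=
          Equiv.tsum_eq (Equiv.addRight (2:ℤ))
            (fun k : ℤ => iteratedDeriv t σ ((x + 1) - (k:ℝ)))
  rw [tsum_div_const, (hsum (x+1)).tsum_sub (hsum (x-1)), reix]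
  ring

lemma moment_hasDerivAt {σ : ℝ → ℝ} {β : ℝ} {m : ℕ} {K C : ℕ → ℝ}
    (h4 : Sigma4 σ m β K C) {t j : ℕ} (ht : t < m) (hj : j ≤ m) (x : ℝ) :
    HasDerivAt (fun y => algMoment (iteratedDeriv t (phiFn σ)) j y)
      (algMoment (iteratedDeriv (t + 1) (phiFn σ)) j x
        - (j : ℝ) * algMoment (iteratedDeriv t (phiFn σ)) (j - 1) x) x := by
  obtain ⟨D₁, hD₁0, hD₁⟩ := phi_decay h4 (Nat.succ_le_of_lt ht) hj
  obtain ⟨D₂, hD₂0, hD₂⟩ := phi_decay h4 ht.le (le_trans (Nat.sub_le j 1) hj)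
  obtain ⟨D₃, hD₃0, hD₃⟩ := phi_decay h4 ht.le hj
  have hφ : ContDiff ℝ m (phiFn σ) := phi_contDiff h4.2.2.1
  set g : ℤ → ℝ → ℝ :=
    fun k y => iteratedDeriv t (phiFn σ) (y - (k:ℝ)) * ((k:ℝ) - y) ^ j with hgdef
  set g' : ℤ → ℝ → ℝ := fun k y =>
    iteratedDeriv (t+1) (phiFn σ) (y - (k:ℝ)) * ((k:ℝ) - y) ^ j
      - iteratedDeriv t (phiFn σ) (y - (k:ℝ)) * ((j:ℝ) * ((k:ℝ) - y) ^ (j - 1)) with hg'def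
  have hder : ∀ (k : ℤ) (y : ℝ), HasDerivAt (g k) (g' k y) y := by
    intro k y
    have h1 : HasDerivAt (fun y : ℝ => iteratedDeriv t (phiFn σ) (y - (k:ℝ)))
        (iteratedDeriv (t+1) (phiFn σ) (y - (k:ℝ))) y := by
      have := (iter_hasDerivAt hφ ht (y - (k:ℝ))).comp y
        ((hasDerivAt_id y).sub_const ((k:ℝ)))
      simpa [Function.comp_def] using this
    have h2 : HasDerivAt (fun y : ℝ => ((k:ℝ) - y) ^ j)
        ((j:ℝ) * ((k:ℝ) - y) ^ (j - 1) * (0 - 1)) y :=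
      ((hasDerivAt_const y ((k:ℝ))).sub (hasDerivAt_id y)).pow j
    have h3 : HasDerivAt (g k) _ y := h1.mul h2
    convert h3 using 1
    simp only [hg'def]
    ring
  -- uniform bound on ball x 1
  set u : ℤ → ℝ := fun k => (D₁ + (j:ℝ) * D₂) * (4 * ((1 + |x - (k:ℝ)|) ^ 2)⁻¹) with hudef
  have hsumu : Summable u :=
    (((summable_inv_one_add_sq x).mul_left 4).mul_left _)
  have hkey : ∀ (k : ℤ) (y : ℝ), y ∈ Metric.ball x 1 →
      ((1 + |y - (k:ℝ)|) ^ 2)⁻¹ ≤ 4 * ((1 + |x - (k:ℝ)|) ^ 2)⁻¹ := by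
    intro k y hy
    rw [Metric.mem_ball, Real.dist_eq] at hy
    have h1 : |x - (k:ℝ)| ≤ |x - y| + |y - (k:ℝ)| := abs_sub_le x y (k:ℝ)
    have h2 : 1 + |x - (k:ℝ)| ≤ 2 * (1 + |y - (k:ℝ)|) := by
      have := abs_nonneg (y - (k:ℝ)); linarith [hy.le, abs_sub_comm x y ▸ hy.le]
    have h3 : (1 + |x - (k:ℝ)|) ^ 2 ≤ 4 * (1 + |y - (k:ℝ)|) ^ 2 := by
      nlinarith [abs_nonneg (x - (k:ℝ)), abs_nonneg (y - (k:ℝ))]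
    have hA : (0:ℝ) < (1 + |x - (k:ℝ)|) ^ 2 := by positivity
    have hB : (0:ℝ) < (1 + |y - (k:ℝ)|) ^ 2 := by positivity
    rw [← div_eq_mul_inv, le_div_iff₀ hA, inv_mul_eq_div, div_le_iff₀ hB]
    linarith
  have hbound : ∀ (k : ℤ) (y : ℝ), y ∈ Metric.ball x 1 → ‖g' k y‖ ≤ u k := by
    intro k y hy
    have e1 : |iteratedDeriv (t+1) (phiFn σ) (y - (k:ℝ)) * ((k:ℝ) - y) ^ j|
        ≤ D₁ * ((1 + |y - (k:ℝ)|) ^ 2)⁻¹ := by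
      rw [abs_mul, abs_pow, abs_sub_comm ((k:ℝ)) y]
      exact hD₁ _
    have e2 : |iteratedDeriv t (phiFn σ) (y - (k:ℝ)) * ((j:ℝ) * ((k:ℝ) - y) ^ (j-1))|
        ≤ (j:ℝ) * (D₂ * ((1 + |y - (k:ℝ)|) ^ 2)⁻¹) := by
      rw [abs_mul, abs_mul, abs_pow, abs_sub_comm ((k:ℝ)) y, Nat.abs_cast]
      calc |iteratedDeriv t (phiFn σ) (y - (k:ℝ))| * ((j:ℝ) * |y - (k:ℝ)| ^ (j-1))
          = (j:ℝ) * (|iteratedDeriv t (phiFn σ) (y - (k:ℝ))| * |y - (k:ℝ)| ^ (j-1)) := by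
            ring
        _ ≤ (j:ℝ) * (D₂ * ((1 + |y - (k:ℝ)|) ^ 2)⁻¹) :=
            mul_le_mul_of_nonneg_left (hD₂ _) (Nat.cast_nonneg j)
    have e3 : ‖g' k y‖ ≤ (D₁ + (j:ℝ) * D₂) * ((1 + |y - (k:ℝ)|) ^ 2)⁻¹ := by
      rw [Real.norm_eq_abs, hg'def]
      refine (abs_sub _ _).trans ?_
      have : (D₁ + (j:ℝ) * D₂) * ((1 + |y - (k:ℝ)|) ^ 2)⁻¹
          = D₁ * ((1 + |y - (k:ℝ)|) ^ 2)⁻¹ + (j:ℝ) * (D₂ * ((1 + |y - (k:ℝ)|) ^ 2)⁻¹) := by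
        ring
      rw [this]
      exact add_le_add e1 e2
    refine e3.trans ?_
    rw [hudef]
    have hD : 0 ≤ D₁ + (j:ℝ) * D₂ := by positivity
    calc (D₁ + (j:ℝ) * D₂) * ((1 + |y - (k:ℝ)|) ^ 2)⁻¹
        ≤ (D₁ + (j:ℝ) * D₂) * (4 * ((1 + |x - (k:ℝ)|) ^ 2)⁻¹) :=
          mul_le_mul_of_nonneg_left (hkey k y hy) hD
      _ = (fun k : ℤ => (D₁ + ↑j * D₂) * (4 * ((1 + |x - ↑k|) ^ 2)⁻¹)) k := rfl
  have hsum0 : Summable fun k : ℤ => g k x := moment_summable hD₃ x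
  have H := hasDerivAt_tsum_of_isPreconnected hsumu Metric.isOpen_ball
    (convex_ball x (1:ℝ)).isPreconnected (fun k y hy => hder k y) hbound
    (Metric.mem_ball_self one_pos) hsum0 (Metric.mem_ball_self one_pos)
  have heq : ∑' k : ℤ, g' k x
      = algMoment (iteratedDeriv (t + 1) (phiFn σ)) j x
        - (j : ℝ) * algMoment (iteratedDeriv t (phiFn σ)) (j - 1) x := by
    have S₁ : Summable fun k : ℤ =>
        iteratedDeriv (t+1) (phiFn σ) (x - (k:ℝ)) * ((k:ℝ) - x) ^ j :=
      moment_summable hD₁ x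
    have S₂' : Summable fun k : ℤ =>
        iteratedDeriv t (phiFn σ) (x - (k:ℝ)) * ((k:ℝ) - x) ^ (j - 1) :=
      moment_summable hD₂ x
    have S₂ : Summable fun k : ℤ =>
        iteratedDeriv t (phiFn σ) (x - (k:ℝ)) * ((j:ℝ) * ((k:ℝ) - x) ^ (j - 1)) := by
      refine (S₂'.mul_left ((j:ℝ))).congr fun k => ?_
      ring
    rw [hg'def]
    rw [S₁.tsum_sub S₂]
    unfold algMoment
    congr 1
    rw [← tsum_mul_left]
    apply tsum_congr
    intro k
    ring
  rw [heq] at H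
  exact H

end AuxAlgMoment

theorem alg_moment_deriv_vanishes (σ : ℝ → ℝ) (α β : ℝ) (m : ℕ) (K C : ℕ → ℝ) (A : ℕ → ℝ)
    (hσ : Sigmoidal σ) (hmono : Monotone σ) (h1 : Sigma1 σ) (h2 : Sigma2 σ) (h3 : Sigma3 σ α)
    (h4 : Sigma4 σ m β K C) (h5 : Sigma5 σ m A)
    (s : ℕ) (hs1 : 1 ≤ s) (hsm : s ≤ m) (j : ℕ) (hj : j < s) (x : ℝ) :
    algMoment (iteratedDeriv s (phiFn σ)) j x = 0 := by
  have hm2 : 2 ≤ m := h4.1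
  have main : ∀ s' : ℕ, s' ≤ m → ∀ j' : ℕ, j' ≤ m → ∀ x : ℝ,
      (j' < s' → algMoment (iteratedDeriv s' (phiFn σ)) j' x = 0) ∧
      (s' ≤ j' → algMoment (iteratedDeriv s' (phiFn σ)) j' x
        = (j'.descFactorial s' : ℝ) * algMoment (phiFn σ) (j' - s') x) := by
    intro s'
    induction s' with
    | zero =>
      intro _ j' hj' x
      refine ⟨fun h => absurd h (Nat.not_lt_zero _), fun _ => ?_⟩
      simp [iteratedDeriv_zero]
    | succ s' ih =>
      intro hs'm j' hj' x
      have hs'm' : s' ≤ m := (Nat.le_succ s').trans hs'm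
      have hs'lt : s' < m := Nat.lt_of_succ_le hs'm
      have hzero : HasDerivAt (fun y => algMoment (iteratedDeriv s' (phiFn σ)) j' y) 0 x := by
        rcases lt_or_ge j' s' with hlt | hge
        · have hfun : (fun y => algMoment (iteratedDeriv s' (phiFn σ)) j' y)
              = fun _ => (0:ℝ) := funext fun y => (ih hs'm' j' hj' y).1 hlt
          rw [hfun]; exact hasDerivAt_const x 0
        · have hfun : (fun y => algMoment (iteratedDeriv s' (phiFn σ)) j' y)
              = fun y => (j'.descFactorial s' : ℝ) * algMoment (phiFn σ) (j' - s') y :=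
            funext fun y => (ih hs'm' j' hj' y).2 hge
          rw [hfun]
          rcases Nat.eq_or_lt_of_le hge with heq | hlt'
          · -- j' = s'
            have hjs : j' - s' = 0 := by omega
            rw [hjs]
            have hbase : HasDerivAt (fun y => algMoment (phiFn σ) 0 y) 0 x := by
              have H0 := moment_hasDerivAt h4 (t := 0) (j := 0)
                (by omega) (Nat.zero_le m) x
              rw [iteratedDeriv_zero] at H0
              have hv : algMoment (iteratedDeriv (0 + 1) (phiFn σ)) 0 x
                  - ((0:ℕ) : ℝ) * algMoment (phiFn σ) (0 - 1) x = 0 := by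
                rw [moment_zero_vanish h4 le_rfl (by omega) x]
                simp
              rw [hv] at H0
              exact H0
            have := hbase.const_mul ((j'.descFactorial s' : ℕ) : ℝ)
            simpa using this
          · -- j' > s'
            have h1' : 1 ≤ j' - s' := by omega
            have h2' : j' - s' ≤ m := by omega
            have hfun2 : (fun y => ((j'.descFactorial s' : ℕ) : ℝ) * algMoment (phiFn σ) (j' - s') y)
                = fun _ => ((j'.descFactorial s' : ℕ) : ℝ) * A (j' - s') :=
              funext fun y => by rw [h5 (j' - s') h1' h2' y]
            rw [hfun2]
            exact hasDerivAt_const x _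
      have hD := moment_hasDerivAt h4 (t := s') hs'lt hj' x
      have hval := hD.unique hzero
      have key : algMoment (iteratedDeriv (s' + 1) (phiFn σ)) j' x
          = (j' : ℝ) * algMoment (iteratedDeriv s' (phiFn σ)) (j' - 1) x := by
        linarith [hval]
      constructor
      · intro hlt
        rcases Nat.eq_zero_or_pos j' with rfl | hj'pos
        · rw [key]; simp
        · have hj1 : j' - 1 < s' := by omega
          have hz := (ih hs'm' (j' - 1) (by omega) x).1 hj1
          rw [key, hz, mul_zero]
      · intro hge
        have hj'pos : 1 ≤ j' := by omega
        have h2' := (ih hs'm' (j' - 1) (by omega) x).2 (by omega)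
        rw [key, h2']
        have e : j' - 1 - s' = j' - (s' + 1) := by omega
        rw [e]
        have edesc : ((j'.descFactorial (s' + 1) : ℕ) : ℝ)
            = (j' : ℝ) * (((j' - 1).descFactorial s' : ℕ) : ℝ) := by
          obtain ⟨jj, rfl⟩ : ∃ jj, j' = jj + 1 := ⟨j' - 1, by omega⟩
          rw [Nat.succ_descFactorial_succ]
          push_cast
          simp
        rw [edesc]
        ring
  exact (main s hsm j (by omega) x).1 hj
end

section
/- Let σ be a nondecreasing sigmoidal function satisfying (Σ1)–(Σ5), with α > m + 1 (α from (Σ3), m from (Σ4)), let a < b be integers and δ > 0 with a + δ < b − δ. Let C₀ > 0 and K₀ > 0 be such that φ_σ(x) ≤ C₀|x|^{−α−1} for |x| ≥ K₀. Then for every j = 1, …, m, every x ∈ I_δ := [a+δ, b−δ], and every n ∈ ℕ⁺ with nδ ≥ K₀ + 1, one has |m^n_j(φ_σ, nx) − A_{0,j}| ≤ 2 R̄_{α,0,j} n^{−(α−j+1)/2}, where R̄_{α,0,j} := C₀ (2δ)^{−(α−j+1)/2} ζ((α−j+1)/2) and ζ is the Riemann zeta function. -/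
open Filter Topology MeasureTheory

lemma aux_rpow_neg_two {t : ℝ} (ht : 0 ≤ t) : t ^ (-2:ℝ) = (t^2)⁻¹ := by
  rw [show (-2:ℝ) = -((2:ℕ):ℝ) by norm_num, Real.rpow_neg ht, Real.rpow_natCast]

lemma aux_zeta_summable {p : ℝ} (hp : 1 < p) : Summable (fun i : ℕ => ((i:ℝ)+1) ^ (-p)) := by
  have h := Real.summable_nat_rpow.mpr (show -p < -1 by linarith)
  have h2 := h.comp_injective (add_left_injective 1)
  refine h2.congr fun i => ?_
  simp only [Function.comp]
  push_cast
  ring_nf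

set_option maxHeartbeats 2000000 in
theorem trunc_moment_estimate_phi (σ : ℝ → ℝ) (α β : ℝ) (m : ℕ) (K C : ℕ → ℝ) (A : ℕ → ℝ)
    (hσ : Sigmoidal σ) (hmono : Monotone σ) (h1 : Sigma1 σ) (h2 : Sigma2 σ) (h3 : Sigma3 σ α)
    (h4 : Sigma4 σ m β K C) (h5 : Sigma5 σ m A) (hα : (m : ℝ) + 1 < α)
    (a b : ℤ) (hab : a < b) (δ : ℝ) (hδ : 0 < δ) (hδ2 : (a : ℝ) + δ < (b : ℝ) - δ)
    (C₀ K₀ : ℝ) (hC₀ : 0 < C₀) (hK₀ : 0 < K₀)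
    (hdecay : ∀ x : ℝ, K₀ ≤ |x| → phiFn σ x ≤ C₀ * |x| ^ (-α - 1))
    (j : ℕ) (hj1 : 1 ≤ j) (hjm : j ≤ m)
    (x : ℝ) (hx : x ∈ Set.Icc ((a : ℝ) + δ) ((b : ℝ) - δ))
    (n : ℕ) (hn : 1 ≤ n) (hnδ : K₀ + 1 ≤ (n : ℝ) * δ) :
    |truncMoment (phiFn σ) j a b n ((n : ℝ) * x) - A j|
      ≤ 2 * (C₀ * (2 * δ) ^ (-(α - (j : ℝ) + 1) / 2) * zetaR ((α - (j : ℝ) + 1) / 2)) *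
          (n : ℝ) ^ (-(α - (j : ℝ) + 1) / 2) := by

  obtain ⟨hx1, hx2⟩ := hx
  set NA : ℤ := (n:ℤ)*a with hNA
  set NB : ℤ := (n:ℤ)*b with hNB
  set u : ℝ := (n:ℝ) * x with hu
  set p : ℝ := (α - (j:ℝ) + 1) / 2 with hp
  have hjm' : (j:ℝ) ≤ (m:ℝ) := by exact_mod_cast hjm
  have hp1 : 1 < p := by rw [hp]; linarith
  have hn0 : (0:ℝ) < (n:ℝ) := by exact_mod_cast hn
  have hδn : (0:ℝ) < (n:ℝ) * δ := by positivity
  set c : ℝ := C₀ * (2*δ) ^ (-p) * (n:ℝ) ^ (-p) with hc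
  have hc0 : 0 ≤ c := by positivity
  set g : ℤ → ℝ := fun k => phiFn σ (u - (k:ℝ)) * ((k:ℝ) - u) ^ j with hgdef
  have hφ0 : ∀ y : ℝ, 0 ≤ phiFn σ y := by
    intro y
    have := hmono (show y - 1 ≤ y + 1 by linarith)
    simp only [phiFn]
    linarith
  have habs : ∀ k : ℤ, |g k| = phiFn σ (u - (k:ℝ)) * |u - (k:ℝ)| ^ j := by
    intro k
    rw [hgdef]
    simp only
    rw [abs_mul, abs_of_nonneg (hφ0 _), abs_pow, abs_sub_comm]
  have hbound : ∀ k : ℤ, K₀ ≤ |u - (k:ℝ)| → |g k| ≤ C₀ * |u - (k:ℝ)| ^ (-(2*p)) := by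
    intro k hk
    have ht1 : (0:ℝ) < |u - (k:ℝ)| := lt_of_lt_of_le hK₀ hk
    rw [habs k]
    have h1 : phiFn σ (u - (k:ℝ)) * |u - (k:ℝ)| ^ j
        ≤ (C₀ * |u - (k:ℝ)| ^ (-α-1)) * |u - (k:ℝ)| ^ j :=
      mul_le_mul_of_nonneg_right (hdecay _ hk) (by positivity)
    refine h1.trans (le_of_eq ?_)
    rw [mul_assoc, ← Real.rpow_natCast |u - (k:ℝ)| j, ← Real.rpow_add ht1]
    congr 1
    rw [hp]; push_cast; ring
  have key : ∀ (k : ℤ) (i : ℕ), (n:ℝ) * δ + ((i:ℝ)+1) ≤ |u - (k:ℝ)| →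
      |g k| ≤ c * ((i:ℝ)+1) ^ (-p) := by
    intro k i hik
    have hi0 : (0:ℝ) ≤ (i:ℝ) := Nat.cast_nonneg i
    have hK : K₀ ≤ |u - (k:ℝ)| := by linarith
    have ht1 : (0:ℝ) < |u - (k:ℝ)| := lt_of_lt_of_le hK₀ hK
    refine (hbound k hK).trans ?_
    have hsq : 2 * δ * (n:ℝ) * ((i:ℝ)+1) ≤ |u - (k:ℝ)| ^ 2 := by nlinarith
    have e1 : |u - (k:ℝ)| ^ (-(2*p)) = (|u - (k:ℝ)| ^ 2) ^ (-p) := by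
      rw [← Real.rpow_natCast |u - (k:ℝ)| 2, ← Real.rpow_mul ht1.le]
      norm_num
    have e2 : ((|u - (k:ℝ)|^2:ℝ)) ^ (-p) ≤ (2 * δ * (n:ℝ) * ((i:ℝ)+1)) ^ (-p) :=
      Real.rpow_le_rpow_of_nonpos (by positivity) hsq (by linarith)
    have e3 : (2 * δ * (n:ℝ) * ((i:ℝ)+1)) ^ (-p)
        = (2*δ) ^ (-p) * (n:ℝ) ^ (-p) * ((i:ℝ)+1) ^ (-p) := by
      rw [Real.mul_rpow (by positivity) (by positivity),
          Real.mul_rpow (by positivity) (by positivity)]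
    rw [e1]
    calc C₀ * (|u - (k:ℝ)|^2) ^ (-p)
        ≤ C₀ * ((2*δ) ^ (-p) * (n:ℝ) ^ (-p) * ((i:ℝ)+1) ^ (-p)) := by
          rw [← e3]; exact mul_le_mul_of_nonneg_left e2 hC₀.le
      _ = c * ((i:ℝ)+1) ^ (-p) := by rw [hc]; ring
  -- summability of |g| over ℤ
  have Sabs : Summable (fun k : ℤ => |g k|) := by
    set ku : ℤ := ⌊u⌋ with hku
    set R : ℤ := ⌈K₀⌉ + 2 with hR
    have hRK : K₀ + 2 ≤ (R:ℝ) := by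
      have h := Int.le_ceil K₀
      rw [hR]; push_cast; linarith
    rw [← Finset.summable_compl_iff (Finset.Icc (ku - R) (ku + R))]
    have hmaj : Summable (fun k : ℤ => (4*C₀) * |((k - ku : ℤ):ℝ)| ^ (-2:ℝ)) := by
      have base : Summable (fun k : ℤ => |(k:ℝ)| ^ (-(2:ℝ))) :=
        Real.summable_abs_int_rpow (by norm_num)
      have := base.comp_injective
        (show Function.Injective (fun k : ℤ => k - ku) from fun k₁ k₂ h => by simpa using h)
      exact (this.congr (fun k => by norm_num [Function.comp])).mul_left _
    refine Summable.of_nonneg_of_le (fun k => abs_nonneg _) ?_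
      (hmaj.comp_injective Subtype.coe_injective)
    rintro ⟨k, hk⟩
    simp only [Function.comp]
    rw [Finset.mem_Icc, not_and_or, not_le, not_le] at hk
    have hfl : (ku:ℝ) ≤ u := Int.floor_le u
    have hfl2 : u < (ku:ℝ) + 1 := Int.lt_floor_add_one u
    have hD : ((k - ku : ℤ):ℝ) = (k:ℝ) - (ku:ℝ) := by push_cast; ring
    have hcase : k ≤ ku - R - 1 ∨ ku + R + 1 ≤ k := by omega
    have hcaseR : ((k:ℝ) ≤ (ku:ℝ) - (R:ℝ) - 1) ∨ ((ku:ℝ) + (R:ℝ) + 1 ≤ (k:ℝ)) := by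
      rcases hcase with h | h
      · left
        have h' : ((k:ℤ):ℝ) ≤ ((ku - R - 1 : ℤ):ℝ) := by exact_mod_cast h
        push_cast at h'; linarith
      · right
        have h' : ((ku + R + 1 : ℤ):ℝ) ≤ ((k:ℤ):ℝ) := by exact_mod_cast h
        push_cast at h'; linarith
    have hDt : |(k:ℝ) - (ku:ℝ)| / 2 ≤ |u - (k:ℝ)| ∧ K₀ + 1 ≤ |u - (k:ℝ)|
        ∧ 0 < |(k:ℝ) - (ku:ℝ)| := by
      rcases hcaseR with h | h
      · have h1 : |(k:ℝ) - (ku:ℝ)| = (ku:ℝ) - (k:ℝ) := by rw [abs_sub_comm, abs_of_nonneg (by linarith)]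
        have h2 : |u - (k:ℝ)| = u - (k:ℝ) := abs_of_nonneg (by linarith)
        refine ⟨by rw [h1, h2]; linarith, by rw [h2]; linarith, by rw [h1]; linarith⟩
      · have h1 : |(k:ℝ) - (ku:ℝ)| = (k:ℝ) - (ku:ℝ) := abs_of_nonneg (by linarith)
        have h2 : |u - (k:ℝ)| = (k:ℝ) - u := by rw [abs_sub_comm]; exact abs_of_nonneg (by linarith)
        refine ⟨by rw [h1, h2]; linarith, by rw [h2]; linarith, by rw [h1]; linarith⟩
    obtain ⟨hd1, hd2, hd3⟩ := hDt
    have ht0 : (0:ℝ) < |u - (k:ℝ)| := by linarith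
    have ht1 : (1:ℝ) ≤ |u - (k:ℝ)| := by linarith
    have h1 : |g k| ≤ C₀ * |u - (k:ℝ)| ^ (-(2*p)) := hbound k (by linarith)
    have h2 : |u - (k:ℝ)| ^ (-(2*p)) ≤ |u - (k:ℝ)| ^ (-2:ℝ) :=
      Real.rpow_le_rpow_of_exponent_le ht1 (by rw [hp]; push_cast; linarith)
    have h3 : |u - (k:ℝ)| ^ (-2:ℝ) = (|u - (k:ℝ)|^2)⁻¹ := aux_rpow_neg_two ht0.le
    have h4 : |((k - ku : ℤ):ℝ)| ^ (-2:ℝ) = (|(k:ℝ) - (ku:ℝ)|^2)⁻¹ := by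
      rw [hD]; exact aux_rpow_neg_two (abs_nonneg _)
    have h5' : (|u - (k:ℝ)|^2)⁻¹ ≤ 4 * (|(k:ℝ) - (ku:ℝ)|^2)⁻¹ := by
      rw [show 4 * (|(k:ℝ) - (ku:ℝ)|^2)⁻¹ = (|(k:ℝ) - (ku:ℝ)|^2 / 4)⁻¹ by
        field_simp]
      apply inv_anti₀ (div_pos (pow_pos hd3 2) (by norm_num))
      nlinarith
    calc |g k| ≤ C₀ * |u - (k:ℝ)| ^ (-(2*p)) := h1
      _ ≤ C₀ * (|u - (k:ℝ)|^2)⁻¹ := by rw [← h3]; exact mul_le_mul_of_nonneg_left h2 hC₀.le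
      _ ≤ C₀ * (4 * (|(k:ℝ) - (ku:ℝ)|^2)⁻¹) := mul_le_mul_of_nonneg_left h5' hC₀.le
      _ = 4*C₀ * |((k - ku : ℤ):ℝ)| ^ (-2:ℝ) := by rw [h4]; ring
  have Sg : Summable g := Sabs.of_abs
  set s : Finset ℤ := Finset.Icc NA NB with hsdef
  have hAj : A j = ∑' k : ℤ, g k := (h5 j hj1 hjm u).symm
  have hT : truncMoment (phiFn σ) j a b n u = ∑ k ∈ s, g k := rfl
  have hsplit := Sg.sum_add_tsum_compl (s := s)
  have heq : truncMoment (phiFn σ) j a b n u - A j = -∑' k : ↑((↑s : Set ℤ)ᶜ), g ↑k := by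
    rw [hT, hAj, ← hsplit]; ring
  rw [heq, abs_neg]
  have habs_le : |∑' k : ↑((↑s : Set ℤ)ᶜ), g ↑k| ≤ ∑' k : ↑((↑s : Set ℤ)ᶜ), |g ↑k| := by
    have := norm_tsum_le_tsum_norm (f := fun k : ↑((↑s : Set ℤ)ᶜ) => g ↑k)
      (by have hS := Sabs.subtype ((↑s : Set ℤ)ᶜ); simp only [Real.norm_eq_abs]; exact hS)
    simpa [Real.norm_eq_abs] using this
  set L : Set ℤ := {k : ℤ | k < NA} with hLdef
  set Rs : Set ℤ := {k : ℤ | NB < k} with hRdef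
  have hset : ((↑s : Set ℤ)ᶜ) = L ∪ Rs := by
    ext k
    simp only [hsdef, hLdef, hRdef, Finset.coe_Icc, Set.mem_compl_iff, Set.mem_Icc,
      Set.mem_union, Set.mem_setOf_eq, not_and_or, not_le]
  have hdisj : Disjoint L Rs := by
    have hab' : NA ≤ NB := by
      rw [hNA, hNB]; exact mul_le_mul_of_nonneg_left hab.le (Int.ofNat_nonneg n)
    rw [Set.disjoint_left]
    intro k hk1 hk2
    rw [hLdef, Set.mem_setOf_eq] at hk1
    rw [hRdef, Set.mem_setOf_eq] at hk2
    omega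
  have hsplit2 : (∑' k : ↑((↑s : Set ℤ)ᶜ), |g ↑k|)
      = (∑' k : ↥L, |g ↑k|) + ∑' k : ↥Rs, |g ↑k| := by
    rw [hset]
    exact Summable.tsum_union_disjoint hdisj (Sabs.subtype _) (Sabs.subtype _)
  have hzsum : Summable (fun i : ℕ => c * ((i:ℝ)+1) ^ (-p)) :=
    (aux_zeta_summable hp1).mul_left c
  have hzeta : ∑' i : ℕ, c * ((i:ℝ)+1) ^ (-p) = c * zetaR p := by
    rw [tsum_mul_left]; rfl
  have hna : ((NA : ℤ):ℝ) = (n:ℝ)*(a:ℝ) := by rw [hNA]; push_cast; ring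
  have hnb : ((NB : ℤ):ℝ) = (n:ℝ)*(b:ℝ) := by rw [hNB]; push_cast; ring
  have hL : (∑' k : ↥L, |g ↑k|) ≤ c * zetaR p := by
    rw [← hzeta]
    refine Summable.tsum_le_tsum_of_inj (fun k : ↥L => (NA - (↑k : ℤ) - 1).toNat)
      ?_ (fun i _ => by positivity) ?_ (Sabs.subtype _) hzsum
    · rintro ⟨k1, hk1⟩ ⟨k2, hk2⟩ h
      rw [hLdef, Set.mem_setOf_eq] at hk1 hk2
      have h' : (NA - k1 - 1).toNat = (NA - k2 - 1).toNat := h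
      exact Subtype.ext (show k1 = k2 by omega)
    · rintro ⟨k, hk⟩
      rw [hLdef, Set.mem_setOf_eq] at hk
      have h0 : (0:ℤ) ≤ NA - k - 1 := by omega
      have hto : (((NA - k - 1).toNat : ℕ):ℝ) + 1 = (n:ℝ)*(a:ℝ) - (k:ℝ) := by
        rw [← Int.cast_natCast, Int.toNat_of_nonneg h0]
        push_cast [hNA]; ring
      apply key
      rw [hto]
      have hux : (n:ℝ)*((a:ℝ)+δ) ≤ u := by
        rw [hu]; exact mul_le_mul_of_nonneg_left hx1 hn0.le
      have hkk : (k:ℝ) ≤ (n:ℝ)*(a:ℝ) - 1 := by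
        have : (k:ℝ) ≤ (((n:ℤ)*a - 1 : ℤ):ℝ) := by exact_mod_cast (by omega : k ≤ (n:ℤ)*a - 1)
        push_cast at this; linarith
      have : (n:ℝ)*δ + ((n:ℝ)*(a:ℝ) - (k:ℝ)) ≤ u - (k:ℝ) := by
        have hexp : (n:ℝ)*((a:ℝ)+δ) = (n:ℝ)*(a:ℝ) + (n:ℝ)*δ := by ring
        linarith [hux, hexp ▸ hux]
      exact this.trans (le_abs_self _)
  have hRb : (∑' k : ↥Rs, |g ↑k|) ≤ c * zetaR p := by
    rw [← hzeta]
    refine Summable.tsum_le_tsum_of_inj (fun k : ↥Rs => ((↑k : ℤ) - NB - 1).toNat)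
      ?_ (fun i _ => by positivity) ?_ (Sabs.subtype _) hzsum
    · rintro ⟨k1, hk1⟩ ⟨k2, hk2⟩ h
      rw [hRdef, Set.mem_setOf_eq] at hk1 hk2
      have h' : (k1 - NB - 1).toNat = (k2 - NB - 1).toNat := h
      exact Subtype.ext (show k1 = k2 by omega)
    · rintro ⟨k, hk⟩
      rw [hRdef, Set.mem_setOf_eq] at hk
      have h0 : (0:ℤ) ≤ k - NB - 1 := by omega
      have hto : (((k - NB - 1).toNat : ℕ):ℝ) + 1 = (k:ℝ) - (n:ℝ)*(b:ℝ) := by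
        rw [← Int.cast_natCast, Int.toNat_of_nonneg h0]
        push_cast [hNB]; ring
      apply key
      rw [hto]
      have hux : u ≤ (n:ℝ)*((b:ℝ)-δ) := by
        rw [hu]; exact mul_le_mul_of_nonneg_left hx2 hn0.le
      have : (n:ℝ)*δ + ((k:ℝ) - (n:ℝ)*(b:ℝ)) ≤ (k:ℝ) - u := by nlinarith
      calc (n:ℝ)*δ + ((k:ℝ) - (n:ℝ)*(b:ℝ)) ≤ (k:ℝ) - u := this
        _ ≤ |(k:ℝ) - u| := le_abs_self _
        _ = |u - (k:ℝ)| := abs_sub_comm _ _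
  have hneg : -(α - (j:ℝ) + 1) / 2 = -p := by rw [hp]; ring
  rw [hneg]
  calc |∑' k : ↑((↑s : Set ℤ)ᶜ), g ↑k| ≤ ∑' k : ↑((↑s : Set ℤ)ᶜ), |g ↑k| := habs_le
    _ = (∑' k : ↥L, |g ↑k|) + ∑' k : ↥Rs, |g ↑k| := hsplit2
    _ ≤ c * zetaR p + c * zetaR p := add_le_add hL hRb
    _ = 2 * (C₀ * (2 * δ) ^ (-p) * zetaR p) * (n:ℝ) ^ (-p) := by rw [hc]; ring
end

section
/- Let σ be a nondecreasing sigmoidal function satisfying (Σ1)–(Σ4), let a < b be integers, let δ > 0 with a + δ < b − δ, and let f: [a,b] → ℝ be continuous. Then the modified neural network operators F̃_n(f, x) := ∑_{k=na}^{nb} f(k/n) φ_σ(nx − k) converge to f uniformly on I_δ := [a+δ, b−δ], i.e., lim_{n→+∞} sup_{x∈I_δ} |F̃_n(f, x) − f(x)| = 0. -/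
open Filter Topology MeasureTheory

lemma my_sigma_le_one {σ : ℝ → ℝ} (hmono : Monotone σ) (h1 : Tendsto σ atTop (𝓝 1)) (x : ℝ) :
    σ x ≤ 1 :=
  ge_of_tendsto h1 (by filter_upwards [eventually_ge_atTop x] with y hy using hmono hy)

lemma my_sigma_nonneg {σ : ℝ → ℝ} (hmono : Monotone σ) (h0 : Tendsto σ atBot (𝓝 0)) (x : ℝ) :
    0 ≤ σ x :=
  le_of_tendsto h0 (by filter_upwards [eventually_le_atBot x] with y hy using hmono hy)

lemma my_phi_nonneg {σ : ℝ → ℝ} (hmono : Monotone σ) (x : ℝ) : 0 ≤ phiFn σ x := by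
  have := hmono (show x - 1 ≤ x + 1 by linarith)
  unfold phiFn; linarith

lemma my_tele (σ : ℝ → ℝ) (u : ℝ) (p q : ℤ) (hpq : p ≤ q) :
    ∑ k ∈ Finset.Icc p q, phiFn σ (u - (k : ℝ)) =
      (σ (u - p + 1) + σ (u - p) - σ (u - q) - σ (u - q - 1)) / 2 := by
  refine Int.le_induction (motive := fun q _ => ∑ k ∈ Finset.Icc p q, phiFn σ (u - (k : ℝ)) =
      (σ (u - p + 1) + σ (u - p) - σ (u - q) - σ (u - q - 1)) / 2) ?_ ?_ q hpq
  · show _ = _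
    rw [Finset.Icc_self, Finset.sum_singleton]
    unfold phiFn; ring
  · intro q hq ih
    show _ = _
    have hins : Finset.Icc p (q + 1) = insert (q + 1) (Finset.Icc p q) := by
      ext k; simp only [Finset.mem_Icc, Finset.mem_insert]; omega
    have hnot : (q + 1) ∉ Finset.Icc p q := by simp [Finset.mem_Icc]
    rw [hins, Finset.sum_insert hnot, ih]
    push_cast
    unfold phiFn
    have e3 : u - ((q : ℝ) + 1) - 1 = u - (q : ℝ) - 1 - 1 := by ring
    have e4 : u - ((q : ℝ) + 1) + 1 = u - (q : ℝ) := by ring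
    have e5 : u - ((q : ℝ) + 1) = u - (q : ℝ) - 1 := by ring
    rw [e3, e4, e5]
    ring

lemma my_tele_le_one {σ : ℝ → ℝ} (hmono : Monotone σ) (h0 : Tendsto σ atBot (𝓝 0))
    (h1 : Tendsto σ atTop (𝓝 1)) (u : ℝ) (p q : ℤ) (hpq : p ≤ q) :
    ∑ k ∈ Finset.Icc p q, phiFn σ (u - (k : ℝ)) ≤ 1 := by
  rw [my_tele σ u p q hpq]
  have := my_sigma_le_one hmono h1 (u - p + 1)
  have := my_sigma_le_one hmono h1 (u - p)
  have := my_sigma_nonneg hmono h0 (u - q)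
  have := my_sigma_nonneg hmono h0 (u - q - 1)
  linarith

lemma my_tele_ub_left {σ : ℝ → ℝ} (hmono : Monotone σ) (h0 : Tendsto σ atBot (𝓝 0))
    (u : ℝ) (p q : ℤ) (hpq : p ≤ q) :
    ∑ k ∈ Finset.Icc p q, phiFn σ (u - (k : ℝ)) ≤ σ (u - p + 1) := by
  rw [my_tele σ u p q hpq]
  have := hmono (show u - (p:ℝ) ≤ u - p + 1 by linarith)
  have := my_sigma_nonneg hmono h0 (u - q)
  have := my_sigma_nonneg hmono h0 (u - q - 1)
  linarith

lemma my_tele_ub_right {σ : ℝ → ℝ} (hmono : Monotone σ) (h1 : Tendsto σ atTop (𝓝 1))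
    (u : ℝ) (p q : ℤ) (hpq : p ≤ q) :
    ∑ k ∈ Finset.Icc p q, phiFn σ (u - (k : ℝ)) ≤ 1 - σ (u - q - 1) := by
  rw [my_tele σ u p q hpq]
  have := hmono (show u - (q:ℝ) - 1 ≤ u - q by linarith)
  have := my_sigma_le_one hmono h1 (u - p + 1)
  have := my_sigma_le_one hmono h1 (u - p)
  linarith

lemma my_tele_lb {σ : ℝ → ℝ} (hmono : Monotone σ) (u : ℝ) (p q : ℤ) (hpq : p ≤ q) :
    1 - ∑ k ∈ Finset.Icc p q, phiFn σ (u - (k : ℝ)) ≤ (1 - σ (u - p)) + σ (u - q) := by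
  rw [my_tele σ u p q hpq]
  have := hmono (show u - (p:ℝ) ≤ u - p + 1 by linarith)
  have := hmono (show u - (q:ℝ) - 1 ≤ u - q by linarith)
  linarith

set_option maxHeartbeats 1000000 in
theorem modified_NN_uniform_convergence (σ : ℝ → ℝ) (α β : ℝ) (m : ℕ) (K C : ℕ → ℝ)
    (hσ : Sigmoidal σ) (hmono : Monotone σ) (h1 : Sigma1 σ) (h2 : Sigma2 σ) (h3 : Sigma3 σ α)
    (h4 : Sigma4 σ m β K C) (a b : ℤ) (hab : a < b)
    (δ : ℝ) (hδ : 0 < δ) (hδ2 : (a : ℝ) + δ < (b : ℝ) - δ)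
    (f : ℝ → ℝ) (hf : ContinuousOn f (Set.Icc (a : ℝ) (b : ℝ))) :
    TendstoUniformlyOn (fun (n : ℕ) (x : ℝ) => Ftil σ f a b n x) f atTop
      (Set.Icc ((a : ℝ) + δ) ((b : ℝ) - δ)) := by
  obtain ⟨-, h0σ, h1σ⟩ := hσ
  have hσ0 : ∀ y : ℝ, 0 ≤ σ y := my_sigma_nonneg hmono h0σ
  have hσ1 : ∀ y : ℝ, σ y ≤ 1 := my_sigma_le_one hmono h1σ
  have hab' : (a : ℝ) < b := by exact_mod_cast hab
  -- bound for f
  obtain ⟨M0, hM0⟩ := isCompact_Icc.exists_bound_of_continuousOn hf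
  set M : ℝ := max M0 0 with hMdef
  have hMnn : 0 ≤ M := le_max_right _ _
  have hMb : ∀ y ∈ Set.Icc (a : ℝ) (b : ℝ), |f y| ≤ M := fun y hy =>
    le_trans (by simpa using hM0 y hy) (le_max_left _ _)
  rw [Metric.tendstoUniformlyOn_iff]
  intro ε hε
  -- uniform continuity
  have huc : UniformContinuousOn f (Set.Icc (a : ℝ) (b : ℝ)) :=
    isCompact_Icc.uniformContinuousOn_of_continuous hf
  rw [Metric.uniformContinuousOn_iff] at huc
  obtain ⟨η, hη, hηc⟩ := huc (ε / 4) (by positivity)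
  set θ : ℝ := η / 2 with hθdef
  have hθ : 0 < θ := by positivity
  set ε' : ℝ := ε / (16 * (M + 1)) with hε'def
  have hε' : 0 < ε' := by positivity
  -- tail thresholds for σ
  obtain ⟨R, hR⟩ := ((tendsto_order.1 h1σ).1 (1 - ε') (by linarith)).exists_forall_of_atTop
  obtain ⟨L, hL⟩ := ((tendsto_order.1 h0σ).2 ε' hε').exists_forall_of_atBot
  have hNδ : Tendsto (fun n : ℕ => (n : ℝ) * δ) atTop atTop :=
    tendsto_natCast_atTop_atTop.atTop_mul_const hδ
  have hNθ : Tendsto (fun n : ℕ => (n : ℝ) * θ) atTop atTop :=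
    tendsto_natCast_atTop_atTop.atTop_mul_const hθ
  have e1 : ∀ᶠ n : ℕ in atTop, R ≤ (n : ℝ) * δ := hNδ.eventually_ge_atTop R
  have e2 : ∀ᶠ n : ℕ in atTop, R ≤ (n : ℝ) * θ - 1 := by
    have : Tendsto (fun n : ℕ => (n : ℝ) * θ + (-1)) atTop atTop :=
      tendsto_atTop_add_const_right atTop (-1) hNθ
    simpa [sub_eq_add_neg] using this.eventually_ge_atTop R
  have e3 : ∀ᶠ n : ℕ in atTop, -((n : ℝ) * δ) ≤ L :=
    (tendsto_neg_atTop_atBot.comp hNδ).eventually_le_atBot L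
  have e4 : ∀ᶠ n : ℕ in atTop, 1 - (n : ℝ) * θ ≤ L := by
    have : Tendsto (fun n : ℕ => -((n : ℝ) * θ) + 1) atTop atBot :=
      tendsto_atBot_add_const_right atTop 1 (tendsto_neg_atTop_atBot.comp hNθ)
    simpa [sub_eq_add_neg, add_comm] using this.eventually_le_atBot L
  filter_upwards [e1, e2, e3, e4, eventually_ge_atTop 1] with n hn1 hn2 hn3 hn4 hn5
  intro x hx
  have hn0 : (0 : ℝ) < (n : ℝ) := by exact_mod_cast Nat.lt_of_lt_of_le Nat.zero_lt_one hn5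
  have hx' : x ∈ Set.Icc (a : ℝ) (b : ℝ) := ⟨by linarith [hx.1], by linarith [hx.2]⟩
  set u : ℝ := (n : ℝ) * x with hudef
  set T : Finset ℤ := Finset.Icc ((n : ℤ) * a) ((n : ℤ) * b) with hTdef
  have hTab : (n : ℤ) * a ≤ (n : ℤ) * b := by
    have : (0 : ℤ) ≤ (n : ℤ) := Int.natCast_nonneg n
    exact mul_le_mul_of_nonneg_left hab.le this
  -- the total truncated mass
  set S : ℝ := ∑ k ∈ T, phiFn σ (u - (k : ℝ)) with hSdef
  have hcasta : (((n : ℤ) * a : ℤ) : ℝ) = (n : ℝ) * (a : ℝ) := by push_cast; ring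
  have hcastb : (((n : ℤ) * b : ℤ) : ℝ) = (n : ℝ) * (b : ℝ) := by push_cast; ring
  have hA1 : (n : ℝ) * δ ≤ u - (((n : ℤ) * a : ℤ) : ℝ) := by
    rw [hcasta]
    have : (n : ℝ) * δ ≤ (n : ℝ) * (x - (a : ℝ)) :=
      mul_le_mul_of_nonneg_left (by linarith [hx.1]) hn0.le
    linarith [this]
  have hB1 : u - (((n : ℤ) * b : ℤ) : ℝ) ≤ -((n : ℝ) * δ) := by
    rw [hcastb]
    have : (n : ℝ) * (x - (b : ℝ)) ≤ (n : ℝ) * (-δ) :=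
      mul_le_mul_of_nonneg_left (by linarith [hx.2]) hn0.le
    linarith [this]
  have hS_le_one : S ≤ 1 := my_tele_le_one hmono h0σ h1σ u _ _ hTab
  have hS_ge : 1 - S ≤ (1 - σ ((n : ℝ) * δ)) + σ (-((n : ℝ) * δ)) := by
    have h := my_tele_lb hmono u _ _ hTab
    have m1 : σ ((n : ℝ) * δ) ≤ σ (u - (((n : ℤ) * a : ℤ) : ℝ)) := hmono hA1
    have m2 : σ (u - (((n : ℤ) * b : ℤ) : ℝ)) ≤ σ (-((n : ℝ) * δ)) := hmono hB1
    linarith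
  -- decomposition
  have hdecomp : f x - Ftil σ f a b n x =
      (∑ k ∈ T, (f x - f ((k : ℝ) / n)) * phiFn σ (u - (k : ℝ))) + f x * (1 - S) := by
    unfold Ftil
    rw [hSdef]
    simp only [sub_mul, Finset.sum_sub_distrib, ← Finset.mul_sum, ← hTdef, ← hudef]
    ring
  -- each node k/n lies in [a,b]
  have hkin : ∀ k ∈ T, (k : ℝ) / n ∈ Set.Icc (a : ℝ) (b : ℝ) := by
    intro k hk
    rw [hTdef, Finset.mem_Icc] at hk
    have hk1 : (n : ℝ) * (a : ℝ) ≤ (k : ℝ) := by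
      have := (Int.cast_le (R := ℝ)).2 hk.1; rw [hcasta] at this; exact this
    have hk2 : (k : ℝ) ≤ (n : ℝ) * (b : ℝ) := by
      have := (Int.cast_le (R := ℝ)).2 hk.2; rw [hcastb] at this; exact this
    constructor
    · rw [le_div_iff₀ hn0]; linarith
    · rw [div_le_iff₀ hn0]; linarith
  have hfb : ∀ k ∈ T, |f x - f ((k : ℝ) / n)| ≤ 2 * M := by
    intro k hk
    have := hMb _ (hkin k hk)
    have := hMb x hx'
    calc |f x - f ((k : ℝ) / n)| ≤ |f x| + |f ((k : ℝ) / n)| := abs_sub _ _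
      _ ≤ 2 * M := by linarith
  -- split near / far
  set P : ℤ → Prop := fun k => |(k : ℝ) - u| ≤ (n : ℝ) * θ with hPdef
  have hPdec : DecidablePred P := fun k => Real.decidableLE _ _
  have hsplit : ∑ k ∈ T, |f x - f ((k : ℝ) / n)| * phiFn σ (u - (k : ℝ)) =
      (∑ k ∈ T.filter P, |f x - f ((k : ℝ) / n)| * phiFn σ (u - (k : ℝ))) +
      (∑ k ∈ T.filter (fun k => ¬ P k), |f x - f ((k : ℝ) / n)| * phiFn σ (u - (k : ℝ))) :=
    (Finset.sum_filter_add_sum_filter_not T P _).symm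
  -- near part
  have hnear : ∑ k ∈ T.filter P, |f x - f ((k : ℝ) / n)| * phiFn σ (u - (k : ℝ)) ≤ ε / 4 := by
    have step1 : ∑ k ∈ T.filter P, |f x - f ((k : ℝ) / n)| * phiFn σ (u - (k : ℝ)) ≤
        ∑ k ∈ T.filter P, (ε / 4) * phiFn σ (u - (k : ℝ)) := by
      refine Finset.sum_le_sum ?_
      intro k hk
      rw [Finset.mem_filter] at hk
      have hkT := hk.1
      have hkP : |(k : ℝ) - u| ≤ (n : ℝ) * θ := hk.2
      have hdist : dist x ((k : ℝ) / n) < η := by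
        rw [Real.dist_eq]
        have : |x - (k : ℝ) / n| = |(k : ℝ) - u| / n := by
          rw [abs_sub_comm, show ((n:ℝ)) = |(n:ℝ)| from (abs_of_pos hn0).symm, ← abs_div]
          congr 1
          rw [hudef]
          field_simp
          rw [abs_of_pos hn0]; ring
        rw [this]
        have : |(k : ℝ) - u| / n ≤ θ := by
          rw [div_le_iff₀ hn0]; linarith [hkP]
        linarith [this, hθ]
      have := hηc x hx' ((k : ℝ) / n) (hkin k hkT) hdist
      rw [Real.dist_eq] at this
      exact mul_le_mul_of_nonneg_right this.le (my_phi_nonneg hmono _)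
    have step2 : ∑ k ∈ T.filter P, (ε / 4) * phiFn σ (u - (k : ℝ)) ≤ ε / 4 := by
      rw [← Finset.mul_sum]
      have hsub : ∑ k ∈ T.filter P, phiFn σ (u - (k : ℝ)) ≤ S := by
        rw [hSdef]
        exact Finset.sum_le_sum_of_subset_of_nonneg (Finset.filter_subset _ _)
          (fun k _ _ => my_phi_nonneg hmono _)
      nlinarith [hS_le_one, hε.le, hsub]
    linarith
  -- far part
  have hnθ : 0 < (n : ℝ) * θ := mul_pos hn0 hθ
  set q' : ℤ := ⌈u - (n : ℝ) * θ⌉ - 1 with hq'def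
  set p' : ℤ := ⌊u + (n : ℝ) * θ⌋ + 1 with hp'def
  have hq' : (q' : ℝ) < u - (n : ℝ) * θ := by
    rw [hq'def]; push_cast
    linarith [Int.ceil_lt_add_one (u - (n : ℝ) * θ)]
  have hp' : u + (n : ℝ) * θ < (p' : ℝ) := by
    rw [hp'def]; push_cast
    linarith [Int.lt_floor_add_one (u + (n : ℝ) * θ)]
  have hq'p' : q' < p' := by
    have : (q' : ℝ) < (p' : ℝ) := by linarith
    exact_mod_cast this
  have hsubset : T.filter (fun k => ¬ P k) ⊆
      Finset.Icc ((n : ℤ) * a) q' ∪ Finset.Icc p' ((n : ℤ) * b) := by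
    intro k hk
    rw [Finset.mem_filter, hTdef, Finset.mem_Icc] at hk
    obtain ⟨⟨hka, hkb⟩, hkP⟩ := hk
    rw [hPdef] at hkP
    rw [Finset.mem_union, Finset.mem_Icc, Finset.mem_Icc]
    rcases lt_abs.1 (not_le.1 hkP) with h | h
    · right
      have : ⌊u + (n : ℝ) * θ⌋ < k := Int.floor_lt.2 (by linarith)
      exact ⟨by omega, hkb⟩
    · left
      have : k < ⌈u - (n : ℝ) * θ⌉ := Int.lt_ceil.2 (by linarith)
      exact ⟨hka, by omega⟩
  have hdisj : Disjoint (Finset.Icc ((n : ℤ) * a) q') (Finset.Icc p' ((n : ℤ) * b)) := by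
    rw [Finset.disjoint_left]
    intro k hk1 hk2
    rw [Finset.mem_Icc] at hk1 hk2
    omega
  have hbL : ∑ k ∈ Finset.Icc ((n : ℤ) * a) q', phiFn σ (u - (k : ℝ)) ≤
      1 - σ ((n : ℝ) * θ - 1) := by
    by_cases h : (n : ℤ) * a ≤ q'
    · refine le_trans (my_tele_ub_right hmono h1σ u _ _ h) ?_
      have harg : (n : ℝ) * θ - 1 ≤ u - (q' : ℝ) - 1 := by linarith
      linarith [hmono harg]
    · rw [Finset.Icc_eq_empty h, Finset.sum_empty]
      linarith [hσ1 ((n : ℝ) * θ - 1)]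
  have hbR : ∑ k ∈ Finset.Icc p' ((n : ℤ) * b), phiFn σ (u - (k : ℝ)) ≤
      σ (1 - (n : ℝ) * θ) := by
    by_cases h : p' ≤ (n : ℤ) * b
    · refine le_trans (my_tele_ub_left hmono h0σ u _ _ h) ?_
      have harg : u - (p' : ℝ) + 1 ≤ 1 - (n : ℝ) * θ := by linarith
      exact hmono harg
    · rw [Finset.Icc_eq_empty h, Finset.sum_empty]
      exact hσ0 _
  have hfarφ : ∑ k ∈ T.filter (fun k => ¬ P k), phiFn σ (u - (k : ℝ)) ≤
      (1 - σ ((n : ℝ) * θ - 1)) + σ (1 - (n : ℝ) * θ) := by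
    calc ∑ k ∈ T.filter (fun k => ¬ P k), phiFn σ (u - (k : ℝ))
        ≤ ∑ k ∈ Finset.Icc ((n : ℤ) * a) q' ∪ Finset.Icc p' ((n : ℤ) * b),
            phiFn σ (u - (k : ℝ)) :=
          Finset.sum_le_sum_of_subset_of_nonneg hsubset
            (fun k _ _ => my_phi_nonneg hmono _)
      _ = (∑ k ∈ Finset.Icc ((n : ℤ) * a) q', phiFn σ (u - (k : ℝ))) +
            (∑ k ∈ Finset.Icc p' ((n : ℤ) * b), phiFn σ (u - (k : ℝ))) :=
          Finset.sum_union hdisj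
      _ ≤ _ := add_le_add hbL hbR
  have hfar : ∑ k ∈ T.filter (fun k => ¬ P k), |f x - f ((k : ℝ) / n)| * phiFn σ (u - (k : ℝ))
      ≤ 2 * M * ((1 - σ ((n : ℝ) * θ - 1)) + σ (1 - (n : ℝ) * θ)) := by
    calc ∑ k ∈ T.filter (fun k => ¬ P k), |f x - f ((k : ℝ) / n)| * phiFn σ (u - (k : ℝ))
        ≤ ∑ k ∈ T.filter (fun k => ¬ P k), (2 * M) * phiFn σ (u - (k : ℝ)) := by
          refine Finset.sum_le_sum ?_
          intro k hk
          exact mul_le_mul_of_nonneg_right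
            (hfb k (Finset.filter_subset _ _ hk)) (my_phi_nonneg hmono _)
      _ = (2 * M) * ∑ k ∈ T.filter (fun k => ¬ P k), phiFn σ (u - (k : ℝ)) :=
          (Finset.mul_sum _ _ _).symm
      _ ≤ _ := mul_le_mul_of_nonneg_left hfarφ (by linarith)
  -- numeric tail bounds
  have n1 : 1 - σ ((n : ℝ) * δ) < ε' := by have := hR _ hn1; linarith
  have n2 : σ (-((n : ℝ) * δ)) < ε' := hL _ hn3
  have n3 : 1 - σ ((n : ℝ) * θ - 1) < ε' := by have := hR _ hn2; linarith
  have n4 : σ (1 - (n : ℝ) * θ) < ε' := hL _ hn4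
  -- assemble
  rw [Real.dist_eq]
  have habs : |f x - Ftil σ f a b n x| ≤
      (∑ k ∈ T, |f x - f ((k : ℝ) / n)| * phiFn σ (u - (k : ℝ))) + M * (1 - S) := by
    rw [hdecomp]
    refine le_trans (abs_add_le _ _) (add_le_add ?_ ?_)
    · refine le_trans (Finset.abs_sum_le_sum_abs _ _) (Finset.sum_le_sum ?_)
      intro k _
      rw [abs_mul, abs_of_nonneg (my_phi_nonneg hmono _)]
    · rw [abs_mul, abs_of_nonneg (by linarith : (0:ℝ) ≤ 1 - S)]
      exact mul_le_mul_of_nonneg_right (hMb x hx') (by linarith)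
  have hMS : M * (1 - S) ≤ M * (2 * ε') := by
    refine mul_le_mul_of_nonneg_left ?_ hMnn
    linarith
  have hfar2 : 2 * M * ((1 - σ ((n : ℝ) * θ - 1)) + σ (1 - (n : ℝ) * θ)) ≤
      2 * M * (2 * ε') := by
    refine mul_le_mul_of_nonneg_left (by linarith) (by linarith)
  have hεcalc : 6 * (M + 1) * ε' = 6 * ε / 16 := by
    rw [hε'def]; field_simp
  have hM1 : M * (2 * ε') + 2 * M * (2 * ε') ≤ 6 * (M + 1) * ε' := by nlinarith
  calc |f x - Ftil σ f a b n x| ≤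
      (∑ k ∈ T, |f x - f ((k : ℝ) / n)| * phiFn σ (u - (k : ℝ))) + M * (1 - S) := habs
    _ ≤ ε / 4 + 2 * M * ((1 - σ ((n : ℝ) * θ - 1)) + σ (1 - (n : ℝ) * θ)) + M * (1 - S) := by
        rw [hsplit]; linarith [hnear, hfar]
    _ < ε := by linarith [hM1, hεcalc, hMS, hfar2, hε]
end
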